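/- Define F(n) = S(n)/2^{n+1}, where S satisfies S(1) = s₁ (a fixed real) and S(n) = 2^{n-1} + C(n-1, ⌊(n-1)/2⌋) + n − 2 + 2S(n-1) for n ≥ 2. Then F(n) = n/4 + √(n/(2π)) + O(1); i.e., there exists a constant C with |F(n) − n/4 − √(n/(2π))| ≤ C for all n ≥ 1. -/

import Mathlib

open Real

namespace FAsymp

open Finset

noncomputable def b (n : ℕ) : ℝ := (Nat.centralBinom n : ℝ) / 4 ^ n

lemma b_pos (n : ℕ) : 0 < b n :=
  div_pos (by exact_mod_cast n.centralBinom_pos) (by positivity)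

lemma b_zero : b 0 = 1 := by simp [b, Nat.centralBinom]

lemma b_succ (n : ℕ) : b (n + 1) = b n * ((2 * n + 1) / (2 * n + 2)) := by
  have h : ((n : ℝ) + 1) * (Nat.centralBinom (n + 1) : ℝ)
      = 2 * (2 * n + 1) * Nat.centralBinom n := by
    exact_mod_cast Nat.succ_mul_centralBinom_succ n
  have h4 : (4 : ℝ) ^ (n + 1) = 4 ^ n * 4 := pow_succ 4 n
  simp only [b, h4]
  have hn1 : ((n : ℝ) + 1) ≠ 0 := by positivity
  field_simp
  nlinarith [h, pow_pos (show (0:ℝ) < 4 by norm_num) n]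

lemma b_le_one (n : ℕ) : b n ≤ 1 := by
  induction n with
  | zero => rw [b_zero]
  | succ k ih =>
    rw [b_succ]
    have h1 : (2 * (k:ℝ) + 1) / (2 * k + 2) ≤ 1 := by
      rw [div_le_one (by positivity)]; linarith
    nlinarith [b_pos k]

lemma W_inv (k : ℕ) : (2 * k + 1) * b k ^ 2 * Real.Wallis.W k = 1 := by
  induction k with
  | zero => simp [Real.Wallis.W, b_zero]
  | succ n ih =>
    rw [Real.Wallis.W_succ, b_succ]
    push_cast
    field_simp
    linear_combination (2*(n:ℝ)+3) * ih

lemma b_sq_ge (n : ℕ) : 2 / (π * (2 * n + 1)) ≤ b n ^ 2 := by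
  have hW := Real.Wallis.W_le n
  have hWp := Real.Wallis.W_pos n
  have h := W_inv n
  have hd : (0:ℝ) < 2 * n + 1 := by positivity
  have hπ := Real.pi_pos
  rw [div_le_iff₀ (by positivity)]
  nlinarith [sq_nonneg (b n)]

lemma b_sq_le (n : ℕ) (hn : 1 ≤ n) : b n ^ 2 ≤ 1 / (π * n) := by
  have hW := Real.Wallis.le_W n
  have hWp := Real.Wallis.W_pos n
  have h := W_inv n
  have hπ := Real.pi_pos
  have hn' : (1:ℝ) ≤ n := by exact_mod_cast hn
  have hb2 : (0:ℝ) < b n ^ 2 := pow_pos (b_pos n) 2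
  have hW' : (2 * (n:ℝ) + 1) * (π / 2) ≤ Real.Wallis.W n * (2 * n + 2) := by
    rw [div_mul_eq_mul_div, div_le_iff₀ (by positivity)] at hW
    linarith
  rw [le_div_iff₀ (by positivity)]
  nlinarith [mul_le_mul_of_nonneg_left hW'
    (le_of_lt (mul_pos (by positivity : (0:ℝ) < 2 * n + 1) hb2))]

noncomputable def a (i : ℕ) : ℝ := (i.choose (i / 2) : ℝ) / 2 ^ i

lemma a_even (n : ℕ) : a (2 * n) = b n := by
  have h1 : 2 * n / 2 = n := by omega
  simp only [a, b, h1, Nat.centralBinom, pow_mul]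
  norm_num

lemma a_odd (n : ℕ) : a (2 * n + 1) = b (n + 1) := by
  have h1 : (2 * n + 1) / 2 = n := by omega
  have hsymm : (2 * n + 1).choose (n + 1) = (2 * n + 1).choose n := by
    have := Nat.choose_symm (show n + 1 ≤ 2 * n + 1 by omega)
    simpa [show 2 * n + 1 - (n + 1) = n by omega] using this.symm
  have h2 : Nat.centralBinom (n + 1) = 2 * (2 * n + 1).choose n := by
    have : 2 * (n + 1) = (2 * n + 1) + 1 := by omega
    rw [Nat.centralBinom, this, Nat.choose_succ_succ, hsymm]; omega
  simp only [a, b, h1, h2]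
  push_cast
  rw [pow_succ, pow_mul]
  norm_num
  ring

lemma sum_a_odd (n : ℕ) : ∑ i ∈ range (2 * n + 1), a i = 2 * (2 * n + 1) * b n - 1 := by
  induction n with
  | zero =>
    simp [a, b_zero]; norm_num
  | succ k ih =>
    have he : 2 * (k + 1) + 1 = (2 * k + 1) + 1 + 1 := by ring
    rw [he, sum_range_succ, sum_range_succ, ih]
    have h2 : a (2 * k + 1 + 1) = b (k + 1) := by
      rw [show 2 * k + 1 + 1 = 2 * (k + 1) by ring]; exact a_even (k + 1)
    rw [a_odd k, h2, b_succ k]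
    have hne : (2 * (k:ℝ) + 2) ≠ 0 := by positivity
    push_cast
    field_simp
    ring

lemma sqrt_add_one_le (y : ℝ) (hy : 0 ≤ y) : Real.sqrt (y + 1) ≤ Real.sqrt y + 1 := by
  have h : y + 1 ≤ (Real.sqrt y + 1) ^ 2 := by
    have := Real.sq_sqrt hy
    nlinarith [Real.sqrt_nonneg y]
  calc Real.sqrt (y + 1) ≤ Real.sqrt ((Real.sqrt y + 1) ^ 2) := Real.sqrt_le_sqrt h
    _ = Real.sqrt y + 1 := Real.sqrt_sq (by positivity)

lemma key_lower (n : ℕ) :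
    Real.sqrt ((2 * n + 1) / (2 * π)) ≤ (2 * n + 1) * b n / 2 := by
  have hπ := Real.pi_pos
  have hv : (0:ℝ) ≤ (2 * n + 1) * b n / 2 :=
    div_nonneg (mul_nonneg (by positivity) (b_pos n).le) (by norm_num)
  have hsq : (2 * (n:ℝ) + 1) / (2 * π) ≤ ((2 * n + 1) * b n / 2) ^ 2 := by
    have h := b_sq_ge n
    rw [div_le_iff₀ (by positivity)] at h ⊢
    nlinarith [sq_nonneg (b n)]
  calc Real.sqrt ((2 * n + 1) / (2 * π)) ≤ Real.sqrt (((2 * n + 1) * b n / 2) ^ 2) :=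
        Real.sqrt_le_sqrt hsq
    _ = (2 * n + 1) * b n / 2 := Real.sqrt_sq hv

lemma key_upper (n : ℕ) :
    (2 * n + 1) * b n / 2 ≤ Real.sqrt ((2 * n + 1) / (2 * π)) + 1 := by
  have hπ := Real.pi_pos
  have hy : (0:ℝ) ≤ (2 * (n:ℝ) + 1) / (2 * π) := by positivity
  have hv : (0:ℝ) ≤ (2 * n + 1) * b n / 2 :=
    div_nonneg (mul_nonneg (by positivity) (b_pos n).le) (by norm_num)
  have hsq : ((2 * n + 1) * b n / 2) ^ 2 ≤ (2 * (n:ℝ) + 1) / (2 * π) + 1 := by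
    rcases Nat.eq_zero_or_pos n with h0 | h1
    · subst h0
      have hb := b_le_one 0
      have hbp := b_pos 0
      push_cast
      nlinarith
    · have h := b_sq_le n h1
      have hn' : (1:ℝ) ≤ n := by exact_mod_cast h1
      have hπ3 : (3:ℝ) ≤ π := by
        nlinarith [Real.pi_gt_three]
      rw [le_div_iff₀ (by positivity)] at h
      rw [div_add' _ _ _ (by positivity : (2:ℝ) * π ≠ 0), le_div_iff₀ (by positivity)]
      have hkey := mul_le_mul_of_nonneg_left h
        (by positivity : (0:ℝ) ≤ (2 * (n:ℝ) + 1) ^ 2)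
      nlinarith [hkey, hn', hπ3, mul_pos hπ (show (0:ℝ) < n by linarith)]
  calc (2 * n + 1) * b n / 2 = Real.sqrt (((2 * n + 1) * b n / 2) ^ 2) :=
        (Real.sqrt_sq hv).symm
    _ ≤ Real.sqrt ((2 * (n:ℝ) + 1) / (2 * π) + 1) := Real.sqrt_le_sqrt hsq
    _ ≤ Real.sqrt ((2 * (n:ℝ) + 1) / (2 * π)) + 1 := sqrt_add_one_le _ hy

lemma sum_est (m : ℕ) (hm : 1 ≤ m) :
    |(∑ i ∈ range m, a i) / 4 - Real.sqrt (m / (2 * π))| ≤ 3 := by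
  have hπ := Real.pi_pos
  rcases Nat.even_or_odd m with ⟨n, hn⟩ | ⟨n, hn⟩
  · obtain ⟨k, rfl⟩ : ∃ k, n = k + 1 := ⟨n - 1, by omega⟩
    have hm2 : m = 2 * k + 1 + 1 := by omega
    subst hm2
    rw [sum_range_succ, sum_a_odd, a_odd]
    have hl := key_lower k
    have hu := key_upper k
    have hb1 := b_pos (k + 1)
    have hb2 := b_le_one (k + 1)
    have hs1 : Real.sqrt ((2 * k + 1) / (2 * π))
        ≤ Real.sqrt (((2 * k + 1 + 1 : ℕ) : ℝ) / (2 * π)) := by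
      apply Real.sqrt_le_sqrt
      push_cast
      gcongr <;> norm_num
    have hs2 : Real.sqrt (((2 * k + 1 + 1 : ℕ) : ℝ) / (2 * π))
        ≤ Real.sqrt ((2 * k + 1) / (2 * π)) + 1 := by
      have : (((2 * k + 1 + 1 : ℕ) : ℝ) / (2 * π)) ≤ (2 * (k:ℝ) + 1) / (2 * π) + 1 := by
        push_cast
        rw [div_add' _ _ _ (by positivity)]
        gcongr
        nlinarith [Real.pi_gt_three]
      calc Real.sqrt (((2 * k + 1 + 1 : ℕ) : ℝ) / (2 * π))
          ≤ Real.sqrt ((2 * (k:ℝ) + 1) / (2 * π) + 1) := Real.sqrt_le_sqrt this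
        _ ≤ _ := sqrt_add_one_le _ (by positivity)
    rw [abs_le]
    push_cast at *
    constructor <;> nlinarith
  · subst hn
    rw [sum_a_odd]
    have hl := key_lower n
    have hu := key_upper n
    rw [abs_le]
    push_cast at *
    constructor <;> nlinarith

noncomputable def e (j : ℕ) : ℝ := ((j : ℝ) - 1) / 2 ^ (j + 2)

lemma esum (n : ℕ) : ∑ j ∈ range n, |e j| ≤ 3 / 2 - ((n : ℝ) + 3) / 2 ^ (n + 1) := by
  induction n with
  | zero => norm_num
  | succ k ih =>
    rw [sum_range_succ]
    have habs : |e k| ≤ ((k : ℝ) + 2) / 2 ^ (k + 2) := by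
      rw [e, abs_div, abs_of_pos (by positivity : (0:ℝ) < 2 ^ (k + 2))]
      gcongr
      have hk0 : (0:ℝ) ≤ (k:ℝ) := Nat.cast_nonneg k
      rw [abs_le]
      constructor <;> linarith
    have hstep : ((k : ℝ) + 3) / 2 ^ (k + 1) - (((k:ℝ) + 1) + 3) / 2 ^ (k + 1 + 1)
        = ((k : ℝ) + 2) / 2 ^ (k + 2) := by
      rw [pow_succ, pow_succ]
      field_simp
      ring
    push_cast
    linarith [habs, ih, hstep]

lemma esum_abs (n : ℕ) : |∑ j ∈ range n, e j| ≤ 3 / 2 := by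
  calc |∑ j ∈ range n, e j| ≤ ∑ j ∈ range n, |e j| := Finset.abs_sum_le_sum_abs _ _
    _ ≤ 3 / 2 - ((n : ℝ) + 3) / 2 ^ (n + 1) := esum n
    _ ≤ 3 / 2 := by
        have : (0:ℝ) ≤ ((n : ℝ) + 3) / 2 ^ (n + 1) := by positivity
        linarith

lemma phi_const (S : ℕ → ℝ)
    (hS : ∀ n : ℕ, 2 ≤ n →
      S n = 2 ^ (n - 1) + ((n - 1).choose ((n - 1) / 2) : ℝ) + (n : ℝ) - 2
        + 2 * S (n - 1)) :
    ∀ n : ℕ, 1 ≤ n →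
      S n / 2 ^ (n + 1) - (n : ℝ) / 4 - (∑ i ∈ range n, a i) / 4 - ∑ j ∈ range n, e j
        = S 1 / 4 - 1 / 4 - 1 / 4 - e 0 := by
  intro n hn
  induction n with
  | zero => omega
  | succ k ih =>
    rcases Nat.eq_or_lt_of_le hn with h1 | h1
    · have hk : k = 0 := by omega
      subst hk
      simp [sum_range_succ, a]
      norm_num
    · have hk : 1 ≤ k := by omega
      have ihh := ih hk
      have hrec := hS (k + 1) (by omega)
      simp only [Nat.add_sub_cancel] at hrec
      rw [sum_range_succ, sum_range_succ, hrec]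
      rw [← ihh]
      have h2 : (2:ℝ) ^ (k + 1 + 1) = 2 ^ (k + 1) * 2 := pow_succ 2 (k+1)
      have h3 : (2:ℝ) ^ (k + 1) = 2 ^ k * 2 := pow_succ 2 k
      have ha : a k = (k.choose (k / 2) : ℝ) / 2 ^ k := rfl
      have he : e k = ((k : ℝ) - 1) / 2 ^ (k + 2) := rfl
      have hp : (0:ℝ) < 2 ^ k := by positivity
      rw [ha, he, h2, h3]
      push_cast
      field_simp
      ring

end FAsymp

/-- If `S : ℕ → ℝ` satisfies `S(n) = 2^{n-1} + C(n-1, ⌊(n-1)/2⌋) + n − 2 + 2S(n-1)`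
for all `n ≥ 2` (with `S(1)` arbitrary), then `F(n) = S(n)/2^{n+1}` satisfies
`F(n) = n/4 + √(n/(2π)) + O(1)`. -/
theorem F_asymptotic (S : ℕ → ℝ)
    (hS : ∀ n : ℕ, 2 ≤ n →
      S n = 2 ^ (n - 1) + ((n - 1).choose ((n - 1) / 2) : ℝ) + (n : ℝ) - 2
        + 2 * S (n - 1)) :
    ∃ C : ℝ, ∀ n : ℕ, 1 ≤ n →
      |S n / 2 ^ (n + 1) - (n : ℝ) / 4 - Real.sqrt ((n : ℝ) / (2 * π))| ≤ C := by
  refine ⟨|S 1 / 4 - 1 / 4 - 1 / 4 - FAsymp.e 0| + 3 + 3 / 2, fun n hn => ?_⟩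
  have hphi := FAsymp.phi_const S hS n hn
  have hsum := FAsymp.sum_est n hn
  have hesum := FAsymp.esum_abs n
  have hid : S n / 2 ^ (n + 1) - (n : ℝ) / 4 - Real.sqrt ((n : ℝ) / (2 * π))
      = (S 1 / 4 - 1 / 4 - 1 / 4 - FAsymp.e 0)
        + ((∑ i ∈ Finset.range n, FAsymp.a i) / 4 - Real.sqrt ((n : ℝ) / (2 * π)))
        + ∑ j ∈ Finset.range n, FAsymp.e j := by
    rw [← hphi]; ring
  rw [hid]
  have t1 := abs_add_le ((S 1 / 4 - 1 / 4 - 1 / 4 - FAsymp.e 0)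
    + ((∑ i ∈ Finset.range n, FAsymp.a i) / 4 - Real.sqrt ((n : ℝ) / (2 * π))))
    (∑ j ∈ Finset.range n, FAsymp.e j)
  have t2 := abs_add_le (S 1 / 4 - 1 / 4 - 1 / 4 - FAsymp.e 0)
    ((∑ i ∈ Finset.range n, FAsymp.a i) / 4 - Real.sqrt ((n : ℝ) / (2 * π)))
  linarith
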